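/- With the notation above, for every f ∈ H_K(𝒟) one has (M_z^* M_z)^{-1}(M_z^* f) = M_z^* δ f = (⊕_{i=1}^d Δ) M_z^* f, where (M_z^* M_z)^{-1} denotes the inverse of the invertible operator M_z^* M_z : Im M_z^* → Im M_z^*. Consequently the orthogonal projection of H_K(𝒟) onto Im M_z equals δ(M_z M_z^*) and coincides with the projection onto H_K(𝒟) ⊖ 𝒟, the orthogonal complement of the constant functions. -/

import Mathlib

open scoped InnerProductSpace

open scoped NNReal ENNReal

/-- If a power series `∑ cⁿ • βₙ` sums to `0` for every `c` in the unit disc,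
then all coefficients vanish. -/
lemma stmt6_coeff_eq_zero (β : ℕ → ℂ)
    (h : ∀ c : ℂ, ‖c‖ < 1 → HasSum (fun n => c ^ n * β n) 0) : ∀ n, β n = 0 := by
  set p : FormalMultilinearSeries ℂ ℂ ℂ :=
    fun n => ContinuousMultilinearMap.mkPiRing ℂ (Fin n) (β n) with hp
  have hpapp : ∀ (n : ℕ) (c : ℂ), (p n fun _ => c) = c ^ n * β n := by
    intro n c
    simp [hp, ContinuousMultilinearMap.mkPiRing_apply, Finset.prod_const, smul_eq_mul, mul_comm]
  have hr : ((2⁻¹ : ℝ≥0) : ℝ≥0∞) ≤ p.radius := by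
    have hsum := (h (2⁻¹ : ℂ) (by norm_num)).summable
    have htend := hsum.tendsto_atTop_zero
    have htn : Filter.Tendsto (fun n => ‖(2⁻¹ : ℂ) ^ n * β n‖) Filter.atTop (nhds 0) := by
      simpa using htend.norm
    obtain ⟨C, hC⟩ := htn.bddAbove_range
    refine p.le_radius_of_bound C ?_
    intro n
    have : ‖p n‖ * ((2⁻¹ : ℝ≥0) : ℝ) ^ n = ‖(2⁻¹ : ℂ) ^ n * β n‖ := by
      simp [hp, ContinuousMultilinearMap.norm_mkPiRing, norm_mul, norm_pow, mul_comm]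
    rw [this]
    exact hC ⟨n, rfl⟩
  have hball : HasFPowerSeriesOnBall (fun _ : ℂ => (0 : ℂ)) p 0 ((2⁻¹ : ℝ≥0) : ℝ≥0∞) := by
    refine ⟨hr, by norm_num, ?_⟩
    intro y hy
    rw [mem_emetric_ball_zero_iff] at hy
    have hy1 : ‖y‖ < 1 := by
      have h2 : (‖y‖₊ : ℝ) < ((2⁻¹ : ℝ≥0) : ℝ) := by exact_mod_cast hy
      rw [coe_nnnorm] at h2
      rw [show ((2⁻¹ : ℝ≥0) : ℝ) = 2⁻¹ by norm_num] at h2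
      calc ‖y‖ < 2⁻¹ := h2
        _ < 1 := by norm_num
    have := h y hy1
    simp only [hpapp]
    simpa using this
  have hzero : p = 0 := hball.hasFPowerSeriesAt.eq_zero
  intro n
  have := hpapp n 1
  rw [hzero] at this
  simpa using this.symm

set_option maxHeartbeats 1000000 in
/-- `(M_z^* M_z)^{-1}(M_z^* f) = M_z^* δ f = (⊕Δ) M_z^* f` for every
`f ∈ H_K(𝒟)`, and the orthogonal projection onto `Im M_z` equals `δ(M_z M_z^*)`, the
projection onto the orthogonal complement of the constants `𝒟 = H₀(𝒟)`. -/
theorem stmt6 {d : ℕ} {𝒟 HK : Type*}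
    [NormedAddCommGroup 𝒟] [InnerProductSpace ℂ 𝒟] [CompleteSpace 𝒟]
    [NormedAddCommGroup HK] [InnerProductSpace ℂ HK] [CompleteSpace HK]
    (a : ℕ → ℝ) (ha0 : a 0 = 1) (hapos : ∀ n, 0 < a n)
    (m M : ℝ) (hm : 0 < m) (hbd : ∀ n, m ≤ a n / a (n + 1) ∧ a n / a (n + 1) ≤ M)
    (ev : EuclideanSpace ℂ (Fin d) → (HK →L[ℂ] 𝒟))
    (hsep : ∀ f : HK, (∀ z, ‖z‖ < 1 → ev z f = 0) → f = 0)
    (hkernel : ∀ z w : EuclideanSpace ℂ (Fin d), ‖z‖ < 1 → ‖w‖ < 1 → ∀ x : 𝒟,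
      HasSum (fun n => ((a n : ℂ) * ⟪w, z⟫_ℂ ^ n) • x) (ev z ((ev w).adjoint x)))
    (Mz : Fin d → HK →L[ℂ] HK)
    (hMz : ∀ (i) (z), ‖z‖ < 1 → ∀ f, ev z (Mz i f) = z i • ev z f)
    (Hn : ℕ → Submodule ℂ HK)
    (hHn : ∀ (n : ℕ) (f : HK), f ∈ Hn n ↔
      ∀ (c : ℂ) (z), ‖z‖ < 1 → ‖c‖ ≤ 1 → ev (c • z) f = c ^ n • ev z f)
    (horthHn : ∀ p q, p ≠ q → ∀ f ∈ Hn p, ∀ g ∈ Hn q, ⟪f, g⟫_ℂ = 0)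
    (hHndense : (⨆ n, Hn n).topologicalClosure = ⊤)
    (δ Δ : HK →L[ℂ] HK)
    (hδ0 : ∀ f ∈ Hn 0, δ f = f)
    (hδ : ∀ n, 1 ≤ n → ∀ f ∈ Hn n, δ f = ((a n / a (n - 1) : ℝ) : ℂ) • f)
    (hΔ : ∀ (n) (f), f ∈ Hn n → Δ f = ((a (n + 1) / a n : ℝ) : ℂ) • f) :
    (∀ f : HK,
      -- (M_z^* M_z)(M_z^* δ f) = M_z^* f, i.e. (M_z^*M_z)⁻¹(M_z^* f) = M_z^* δ f
      (∀ i, (Mz i).adjoint (∑ j, Mz j ((Mz j).adjoint (δ f))) = (Mz i).adjoint f) ∧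
      -- M_z^* δ f = (⊕Δ) M_z^* f componentwise
      (∀ i, (Mz i).adjoint (δ f) = Δ ((Mz i).adjoint f)) ∧
      -- δ(M_z M_z^*) is the orthogonal projection onto (H₀(𝒟))^⊥ = H_K(𝒟) ⊖ 𝒟
      δ (∑ i, Mz i ((Mz i).adjoint f)) ∈ (Hn 0)ᗮ ∧
      f - δ (∑ i, Mz i ((Mz i).adjoint f)) ∈ Hn 0) ∧
    -- the closure of Im M_z is the orthogonal complement of the constants
    (⨆ i, LinearMap.range (Mz i : HK →ₗ[ℂ] HK)).topologicalClosure = (Hn 0)ᗮ := by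
  classical
  have hane : ∀ n, (a n : ℂ) ≠ 0 := fun n => by exact_mod_cast (hapos n).ne'
  have hHmem : ∀ (n : ℕ) (f : HK), f ∈ Hn n → ∀ (c : ℂ) (z), ‖z‖ < 1 → ‖c‖ ≤ 1 →
      ev (c • z) f = c ^ n • ev z f := fun n f hf => (hHn n f).1 hf
  have hsmallz : ∀ (c : ℂ) (z : EuclideanSpace ℂ (Fin d)), ‖z‖ < 1 → ‖c‖ ≤ 1 → ‖c • z‖ < 1 := by
    intro c z hz hc
    rw [norm_smul]
    exact lt_of_le_of_lt (mul_le_of_le_one_left (norm_nonneg z) hc) hz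
  have hclosed : ∀ n, IsClosed ((Hn n : Set HK)) := by
    intro n
    have : (Hn n : Set HK) = ⋂ (c : ℂ) (z : EuclideanSpace ℂ (Fin d)) (_ : ‖z‖ < 1)
        (_ : ‖c‖ ≤ 1), {f : HK | ev (c • z) f = c ^ n • ev z f} := by
      ext f
      simp only [Set.mem_iInter, Set.mem_setOf_eq, SetLike.mem_coe, hHn]
    rw [this]
    refine isClosed_iInter fun c => isClosed_iInter fun z => isClosed_iInter fun _ =>
      isClosed_iInter fun _ => ?_
    exact isClosed_eq (ev (c • z)).continuous ((ev z).continuous.const_smul _)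
  haveI hcompl : ∀ n, CompleteSpace (Hn n) := fun n => (hclosed n).completeSpace_coe
  have hMzmap : ∀ (i : Fin d) (n : ℕ) (f : HK), f ∈ Hn n → Mz i f ∈ Hn (n + 1) := by
    intro i n f hf
    rw [hHn]
    intro c z hz hc
    rw [hMz i (c • z) (hsmallz c z hz hc) f, hMz i z hz f, hHmem n f hf c z hz hc]
    have hcz : (c • z) i = c * z i := rfl
    rw [hcz, smul_smul, smul_smul]
    congr 1
    ring
  have hbot : (⨆ n, Hn n)ᗮ = ⊥ := Submodule.topologicalClosure_eq_top_iff.mp hHndense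
  have hzero : ∀ h : HK, (∀ (p : ℕ), ∀ g ∈ Hn p, ⟪g, h⟫_ℂ = 0) → h = 0 := by
    intro h hyp
    have hmem : h ∈ (⨆ n, Hn n)ᗮ := by
      rw [Submodule.mem_orthogonal]
      intro u hu
      refine Submodule.iSup_induction (motive := fun u => ⟪u, h⟫_ℂ = 0) Hn hu ?_ ?_ ?_
      · intro p g hg
        exact hyp p g hg
      · exact inner_zero_left h
      · intro x y hx hy
        rw [inner_add_left, hx, hy, add_zero]
    rw [hbot] at hmem
    simpa using hmem
  have hmemor : ∀ (n : ℕ) (h : HK), (∀ p, p ≠ n → ∀ g ∈ Hn p, ⟪g, h⟫_ℂ = 0) → h ∈ Hn n := by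
    intro n h hyp
    have hsub : h - (Submodule.orthogonalProjection (Hn n) h : HK) = 0 := by
      apply hzero
      intro p g hg
      rcases eq_or_ne p n with rfl | hpn
      · exact (Submodule.mem_orthogonal _ _).mp
          (Submodule.sub_starProjection_mem_orthogonal (K := Hn p) h) g hg
      · rw [inner_sub_right, hyp p hpn g hg,
          horthHn p n hpn g hg _ (Submodule.orthogonalProjection (Hn n) h).2, sub_zero]
    have heq : h = (Submodule.orthogonalProjection (Hn n) h : HK) := by rwa [sub_eq_zero] at hsub
    rw [heq]
    exact (Submodule.orthogonalProjection (Hn n) h).2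
  have hadjS : ∀ (i : Fin d) (n : ℕ) (f : HK), f ∈ Hn (n + 1) → (Mz i).adjoint f ∈ Hn n := by
    intro i n f hf
    apply hmemor
    intro p hpn g hg
    rw [ContinuousLinearMap.adjoint_inner_right]
    exact horthHn (p + 1) (n + 1) (by omega) _ (hMzmap i p g hg) f hf
  have hadj0 : ∀ (i : Fin d) (f : HK), f ∈ Hn 0 → (Mz i).adjoint f = 0 := by
    intro i f hf
    apply hzero
    intro p g hg
    rw [ContinuousLinearMap.adjoint_inner_right]
    exact horthHn (p + 1) 0 (by omega) _ (hMzmap i p g hg) f hf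
  have hdecomp : ∀ h : HK, ∃ v : (n : ℕ) → Hn n, HasSum (fun n => (v n : HK)) h := by
    have hfam : OrthogonalFamily ℂ (fun n => Hn n) (fun n => (Hn n).subtypeₗᵢ) := by
      intro i j hij u w
      exact horthHn i j hij u u.2 w w.2
    have hHS : IsHilbertSum ℂ (fun n => Hn n) (fun n => (Hn n).subtypeₗᵢ) :=
      IsHilbertSum.mkInternal _ hfam hHndense.symm.le
    intro h
    refine ⟨fun n => hHS.linearIsometryEquiv h n, ?_⟩
    have := hHS.hasSum_linearIsometryEquiv_symm (hHS.linearIsometryEquiv h)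
    simpa using this
  have hcomp_ev : ∀ (w : EuclideanSpace ℂ (Fin d)), ‖w‖ < 1 → ∀ (x : 𝒟) (h : HK) (b : ℕ → ℂ),
      (∀ z, ‖z‖ < 1 → HasSum (fun n => (b n * ⟪w, z⟫_ℂ ^ n) • x) (ev z h)) →
      ∀ (v : (n : ℕ) → Hn n), HasSum (fun n => (v n : HK)) h →
      ∀ (q : ℕ) (z), ‖z‖ < 1 → ev z (v q : HK) = (b q * ⟪w, z⟫_ℂ ^ q) • x := by
    intro w hw x h b hb v hv q z hz
    apply ext_inner_left ℂ
    intro y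
    have key : ∀ c : ℂ, ‖c‖ < 1 → HasSum
        (fun r => c ^ r * (⟪y, ev z (v r : HK)⟫_ℂ - b r * ⟪w, z⟫_ℂ ^ r * ⟪y, x⟫_ℂ)) 0 := by
      intro c hc
      have hc1 : ‖c‖ ≤ 1 := hc.le
      have hcz : ‖c • z‖ < 1 := hsmallz c z hz hc1
      have S1 : HasSum (fun r => ((innerSL ℂ y).comp (ev (c • z))) ((v r : HK)))
          (((innerSL ℂ y).comp (ev (c • z))) h) := hv.mapL _
      have e1 : ∀ r, ⟪y, ev (c • z) ((v r : HK))⟫_ℂ = c ^ r * ⟪y, ev z (v r : HK)⟫_ℂ := by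
        intro r
        rw [hHmem r _ (v r).2 c z hz hc1, inner_smul_right]
      have S2 := (hb (c • z) hcz).mapL (innerSL ℂ y)
      have e2 : ∀ r, ⟪y, (b r * ⟪w, c • z⟫_ℂ ^ r) • x⟫_ℂ
          = c ^ r * (b r * ⟪w, z⟫_ℂ ^ r * ⟪y, x⟫_ℂ) := by
        intro r
        rw [inner_smul_right,
          show ⟪w, c • z⟫_ℂ = c * ⟪w, z⟫_ℂ from inner_smul_right _ _ _, mul_pow]
        ring
      simp only [ContinuousLinearMap.comp_apply, innerSL_apply_apply, e1] at S1
      simp only [innerSL_apply_apply, e2] at S2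
      have S3 := S1.sub S2
      simpa [mul_sub, sub_self] using S3
    have hcoef := stmt6_coeff_eq_zero _ key q
    have heq : ⟪y, ev z (v q : HK)⟫_ℂ = b q * ⟪w, z⟫_ℂ ^ q * ⟪y, x⟫_ℂ :=
      sub_eq_zero.mp hcoef
    rw [inner_smul_right, heq]
  have hpair : ∀ (p : ℕ) (f : HK), f ∈ Hn p → ∀ (h : HK) (v : (n : ℕ) → Hn n),
      HasSum (fun n => (v n : HK)) h → ⟪f, h⟫_ℂ = ⟪f, (v p : HK)⟫_ℂ := by
    intro p f hf h v hv
    have S : HasSum (fun q => (innerSL ℂ f) ((v q : HK))) ((innerSL ℂ f) h) := hv.mapL _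
    have S2 : HasSum (fun q => (innerSL ℂ f) ((v q : HK))) ((innerSL ℂ f) ((v p : HK))) := by
      refine hasSum_single p ?_
      intro q hq
      exact horthHn p q (Ne.symm hq) f hf _ (v q).2
    exact S.unique S2
  have lemE : ∀ (p : ℕ) (f : HK), f ∈ Hn p → ∀ (w : EuclideanSpace ℂ (Fin d)), ‖w‖ < 1 →
      ∀ (x : 𝒟) (h : HK) (b : ℕ → ℂ),
      (∀ z, ‖z‖ < 1 → HasSum (fun n => (b n * ⟪w, z⟫_ℂ ^ n) • x) (ev z h)) →
      (a p : ℂ) * ⟪f, h⟫_ℂ = b p * ⟪f, (ev w).adjoint x⟫_ℂ := by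
    intro p f hf w hw x h b hb
    obtain ⟨u, hu⟩ := hdecomp h
    obtain ⟨v, hv⟩ := hdecomp ((ev w).adjoint x)
    have hbk : ∀ z, ‖z‖ < 1 →
        HasSum (fun n => (((a n : ℝ) : ℂ) * ⟪w, z⟫_ℂ ^ n) • x) (ev z ((ev w).adjoint x)) :=
      fun z hz => hkernel z w hz hw x
    have h1 := hcomp_ev w hw x h b hb u hu p
    have h2 := hcomp_ev w hw x _ (fun n => ((a n : ℝ) : ℂ)) hbk v hv p
    have hvec : ((a p : ℝ) : ℂ) • (u p : HK) - b p • (v p : HK) = 0 := by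
      apply hsep
      intro z hz
      rw [map_sub, map_smul, map_smul, h1 z hz, h2 z hz, smul_smul, smul_smul]
      rw [show ((a p : ℝ) : ℂ) * (b p * ⟪w, z⟫_ℂ ^ p) = b p * (((a p : ℝ) : ℂ) * ⟪w, z⟫_ℂ ^ p)
        from by ring]
      exact sub_self _
    have hvec' : ((a p : ℝ) : ℂ) • (u p : HK) = b p • (v p : HK) := by
      rwa [sub_eq_zero] at hvec
    rw [hpair p f hf h u hu, hpair p f hf _ v hv, ← inner_smul_right, ← inner_smul_right, hvec']
  have hT0 : ∀ f ∈ Hn 0, (∑ i, Mz i ((Mz i).adjoint f)) = 0 := by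
    intro f hf
    simp [hadj0 _ f hf]
  have hTn : ∀ (n : ℕ) (f : HK), f ∈ Hn (n + 1) →
      (∑ i, Mz i ((Mz i).adjoint f)) = ((a n / a (n + 1) : ℝ) : ℂ) • f := by
    intro n f hf
    have key : ∀ w : EuclideanSpace ℂ (Fin d), ‖w‖ < 1 →
        ev w ((∑ i, Mz i ((Mz i).adjoint f)) - ((a n / a (n + 1) : ℝ) : ℂ) • f) = 0 := by
      intro w hw
      apply ext_inner_left ℂ
      intro y
      rw [inner_zero_right]
      set kx : HK := (ev w).adjoint y with hkx
      set g : HK := ∑ i, (starRingEnd ℂ) (w i) • Mz i kx with hgdef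
      set b : ℕ → ℂ := fun q => Nat.casesOn q 0 (fun k => ((a k : ℝ) : ℂ)) with hbdef
      have hevg : ∀ z, ‖z‖ < 1 → ev z g = ⟪w, z⟫_ℂ • ev z kx := by
        intro z hz
        rw [hgdef, map_sum]
        simp only [map_smul, hMz _ z hz]
        rw [show ⟪w, z⟫_ℂ = ∑ i, (starRingEnd ℂ) (w i) * z i from by
          simp [PiLp.inner_apply, RCLike.inner_apply, mul_comm], Finset.sum_smul]
        exact Finset.sum_congr rfl fun i _ => smul_smul _ _ _
      have hbg : ∀ z, ‖z‖ < 1 → HasSum (fun q => (b q * ⟪w, z⟫_ℂ ^ q) • y) (ev z g) := by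
        intro z hz
        rw [hevg z hz]
        have h0 : HasSum (fun q => ⟪w, z⟫_ℂ • (((a q : ℝ) : ℂ) * ⟪w, z⟫_ℂ ^ q) • y)
            (⟪w, z⟫_ℂ • ev z kx) := (hkernel z w hz hw y).const_smul _
        refine (Function.Injective.hasSum_iff Nat.succ_injective ?_).mp ?_
        · intro q hq
          obtain rfl : q = 0 := by
            rcases q with _ | k
            · rfl
            · exact absurd ⟨k, rfl⟩ hq
          simp [hbdef]
        · have hfe : ((fun q => (b q * ⟪w, z⟫_ℂ ^ q) • y) ∘ Nat.succ)
              = fun q => ⟪w, z⟫_ℂ • (((a q : ℝ) : ℂ) * ⟪w, z⟫_ℂ ^ q) • y := by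
            funext q
            simp only [Function.comp, hbdef]
            rw [smul_smul]
            congr 1
            rw [pow_succ]
            ring
          rw [hfe]
          exact h0
      have hip1 : ⟪y, ev w (∑ i, Mz i ((Mz i).adjoint f))⟫_ℂ = ⟪g, f⟫_ℂ := by
        rw [← ContinuousLinearMap.adjoint_inner_left (ev w), ← hkx, hgdef, sum_inner, inner_sum]
        refine Finset.sum_congr rfl fun i _ => ?_
        calc ⟪kx, Mz i ((Mz i).adjoint f)⟫_ℂ
            = ⟪y, ev w (Mz i ((Mz i).adjoint f))⟫_ℂ := by
              rw [hkx, ContinuousLinearMap.adjoint_inner_left]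
          _ = w i * ⟪y, ev w ((Mz i).adjoint f)⟫_ℂ := by rw [hMz i w hw, inner_smul_right]
          _ = w i * ⟪kx, (Mz i).adjoint f⟫_ℂ := by
              rw [hkx, ContinuousLinearMap.adjoint_inner_left]
          _ = w i * ⟪Mz i kx, f⟫_ℂ := by rw [ContinuousLinearMap.adjoint_inner_right]
          _ = ⟪(starRingEnd ℂ) (w i) • Mz i kx, f⟫_ℂ := by
              rw [inner_smul_left, Complex.conj_conj]
      have hlem := lemE (n + 1) f hf w hw y g b hbg
      have hbn : b (n + 1) = ((a n : ℝ) : ℂ) := rfl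
      rw [hbn, ← hkx] at hlem
      have hlem' : ((a (n + 1) : ℝ) : ℂ) * ⟪g, f⟫_ℂ = ((a n : ℝ) : ℂ) * ⟪kx, f⟫_ℂ := by
        have hc := congrArg (starRingEnd ℂ) hlem
        simpa [map_mul, inner_conj_symm, Complex.conj_ofReal] using hc
      rw [map_sub, inner_sub_right, hip1, map_smul, inner_smul_right,
        ← ContinuousLinearMap.adjoint_inner_left (ev w), ← hkx]
      have hs : ((a n / a (n + 1) : ℝ) : ℂ) = ((a n : ℝ) : ℂ) / ((a (n + 1) : ℝ) : ℂ) := by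
        push_cast
        ring
      rw [hs, sub_eq_zero, div_mul_eq_mul_div, eq_div_iff (hane (n + 1))]
      linear_combination hlem'
    have hz := hsep _ key
    rwa [sub_eq_zero] at hz
  have hext0 : ∀ (A : HK →L[ℂ] HK), (∀ (n : ℕ) (g : HK), g ∈ Hn n → A g = 0) →
      ∀ f, A f = 0 := by
    intro A hA f
    have hker : (⨆ n, Hn n) ≤ LinearMap.ker (A : HK →ₗ[ℂ] HK) := by
      refine iSup_le fun n g hg => ?_
      exact LinearMap.mem_ker.mpr (hA n g hg)
    have hcl := Submodule.topologicalClosure_minimal _ hker (ContinuousLinearMap.isClosed_ker A)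
    rw [hHndense] at hcl
    exact LinearMap.mem_ker.mp (hcl Submodule.mem_top)
  have hextMem : ∀ (A : HK →L[ℂ] HK) (K : Submodule ℂ HK), IsClosed ((K : Set HK)) →
      (∀ (n : ℕ) (g : HK), g ∈ Hn n → A g ∈ K) → ∀ f, A f ∈ K := by
    intro A K hK hA f
    have hker : (⨆ n, Hn n) ≤ K.comap (A : HK →ₗ[ℂ] HK) := by
      refine iSup_le fun n g hg => ?_
      exact Submodule.mem_comap.mpr (hA n g hg)
    have hclosed' : IsClosed ((K.comap (A : HK →ₗ[ℂ] HK) : Set HK)) := by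
      have : (K.comap (A : HK →ₗ[ℂ] HK) : Set HK) = A ⁻¹' (K : Set HK) := rfl
      rw [this]
      exact hK.preimage A.continuous
    have hcl := Submodule.topologicalClosure_minimal _ hker hclosed'
    rw [hHndense] at hcl
    exact Submodule.mem_comap.mp (hcl Submodule.mem_top)
  have hδsucc : ∀ (n : ℕ) (f : HK), f ∈ Hn (n + 1) →
      δ f = ((a (n + 1) / a n : ℝ) : ℂ) • f := by
    intro n f hf
    have := hδ (n + 1) (by omega) f hf
    simpa using this
  have hrs : ∀ n : ℕ, ((a (n + 1) / a n : ℝ) : ℂ) * ((a n / a (n + 1) : ℝ) : ℂ) = 1 := by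
    intro n
    push_cast
    rw [div_mul_div_comm, mul_comm ((a (n + 1) : ℝ) : ℂ) ((a n : ℝ) : ℂ)]
    exact div_self (mul_ne_zero (hane n) (hane (n + 1)))
  have hrange : ∀ (i : Fin d) (u : HK), Mz i u ∈ (Hn 0)ᗮ := by
    intro i u
    rw [Submodule.mem_orthogonal]
    intro g hg
    rw [← ContinuousLinearMap.adjoint_inner_left (Mz i), hadj0 i g hg, inner_zero_left]
  have hHnOrth : ∀ (n : ℕ) (g : HK), g ∈ Hn (n + 1) → g ∈ (Hn 0)ᗮ := by
    intro n g hg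
    rw [Submodule.mem_orthogonal]
    intro u hu
    exact horthHn 0 (n + 1) (by omega) u hu g hg
  -- the combined operator `T ∘ δ` applied to `f` equals the sum in the statement
  have hTδ : ∀ (n : ℕ) (g : HK), g ∈ Hn (n + 1) →
      (∑ j, Mz j ((Mz j).adjoint (δ g))) = g := by
    intro n g hg
    rw [hδsucc n g hg]
    simp only [map_smul, ← Finset.smul_sum]
    rw [hTn n g hg, smul_smul, hrs, one_smul]
  constructor
  · intro f
    refine ⟨?_, ?_, ?_, ?_⟩
    · -- goal 1
      intro i
      have hA : ∀ (n : ℕ) (g : HK), g ∈ Hn n →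
          ((Mz i).adjoint.comp (((∑ j, (Mz j).comp (Mz j).adjoint)).comp δ)
            - (Mz i).adjoint) g = 0 := by
        intro n g hg
        simp only [ContinuousLinearMap.sub_apply, ContinuousLinearMap.comp_apply,
          ContinuousLinearMap.sum_apply]
        cases n with
        | zero =>
          rw [hδ0 g hg, hT0 g hg, map_zero, hadj0 i g hg, sub_zero]
        | succ n =>
          rw [hTδ n g hg, sub_self]
      have := hext0 _ hA f
      simp only [ContinuousLinearMap.sub_apply, ContinuousLinearMap.comp_apply,
        ContinuousLinearMap.sum_apply, sub_eq_zero] at this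
      exact this
    · -- goal 2
      intro i
      have hA : ∀ (n : ℕ) (g : HK), g ∈ Hn n →
          ((Mz i).adjoint.comp δ - Δ.comp (Mz i).adjoint) g = 0 := by
        intro n g hg
        simp only [ContinuousLinearMap.sub_apply, ContinuousLinearMap.comp_apply]
        cases n with
        | zero =>
          rw [hδ0 g hg, hadj0 i g hg, map_zero, sub_zero]
        | succ n =>
          rw [hδsucc n g hg, map_smul, hΔ n _ (hadjS i n g hg), sub_self]
      have := hext0 _ hA f
      simp only [ContinuousLinearMap.sub_apply, ContinuousLinearMap.comp_apply,
        sub_eq_zero] at this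
      exact this
    · -- goal 3
      have hA : ∀ (n : ℕ) (g : HK), g ∈ Hn n →
          (δ.comp (∑ j, (Mz j).comp (Mz j).adjoint)) g ∈ (Hn 0)ᗮ := by
        intro n g hg
        simp only [ContinuousLinearMap.comp_apply, ContinuousLinearMap.sum_apply]
        cases n with
        | zero =>
          rw [hT0 g hg, map_zero]
          exact Submodule.zero_mem _
        | succ n =>
          rw [hTn n g hg, map_smul, hδsucc n g hg, smul_smul, mul_comm, hrs, one_smul]
          exact hHnOrth n g hg
      have := hextMem _ _ (Hn 0).isClosed_orthogonal hA f
      simpa only [ContinuousLinearMap.comp_apply, ContinuousLinearMap.sum_apply] using this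
    · -- goal 4
      have hA : ∀ (n : ℕ) (g : HK), g ∈ Hn n →
          (ContinuousLinearMap.id ℂ HK
            - δ.comp (∑ j, (Mz j).comp (Mz j).adjoint)) g ∈ Hn 0 := by
        intro n g hg
        simp only [ContinuousLinearMap.sub_apply, ContinuousLinearMap.comp_apply,
          ContinuousLinearMap.sum_apply, ContinuousLinearMap.id_apply]
        cases n with
        | zero =>
          rw [hT0 g hg, map_zero, sub_zero]
          exact hg
        | succ n =>
          rw [hTn n g hg, map_smul, hδsucc n g hg, smul_smul, mul_comm, hrs, one_smul,
            sub_self]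
          exact Submodule.zero_mem _
      have := hextMem _ _ (hclosed 0) hA f
      simpa only [ContinuousLinearMap.sub_apply, ContinuousLinearMap.comp_apply,
        ContinuousLinearMap.sum_apply, ContinuousLinearMap.id_apply] using this
  · -- goal 5
    apply le_antisymm
    · apply Submodule.topologicalClosure_minimal
      · apply iSup_le
        intro i u hu
        obtain ⟨v, rfl⟩ := hu
        exact hrange i v
      · exact (Hn 0).isClosed_orthogonal
    · intro f hf
      have hSmem : (∑ i, Mz i ((Mz i).adjoint (δ f))) ∈ (⨆ i, LinearMap.range (Mz i : HK →ₗ[ℂ] HK)) :=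
        Submodule.sum_mem _ fun i _ => Submodule.mem_iSup_of_mem i ⟨_, rfl⟩
      have hSorth : (∑ i, Mz i ((Mz i).adjoint (δ f))) ∈ (Hn 0)ᗮ :=
        Submodule.sum_mem _ fun i _ => hrange i _
      have hdiff : f - (∑ i, Mz i ((Mz i).adjoint (δ f))) ∈ Hn 0 := by
        have hA : ∀ (n : ℕ) (g : HK), g ∈ Hn n →
            (ContinuousLinearMap.id ℂ HK
              - (∑ j, (Mz j).comp (Mz j).adjoint).comp δ) g ∈ Hn 0 := by
          intro n g hg
          simp only [ContinuousLinearMap.sub_apply, ContinuousLinearMap.comp_apply,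
            ContinuousLinearMap.sum_apply, ContinuousLinearMap.id_apply]
          cases n with
          | zero =>
            rw [hδ0 g hg, hT0 g hg, sub_zero]
            exact hg
          | succ n =>
            rw [hTδ n g hg, sub_self]
            exact Submodule.zero_mem _
        have := hextMem _ _ (hclosed 0) hA f
        simpa only [ContinuousLinearMap.sub_apply, ContinuousLinearMap.comp_apply,
          ContinuousLinearMap.sum_apply, ContinuousLinearMap.id_apply] using this
      have hdorth : f - (∑ i, Mz i ((Mz i).adjoint (δ f))) ∈ (Hn 0)ᗮ :=
        Submodule.sub_mem _ hf hSorth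
      have hdz : f - (∑ i, Mz i ((Mz i).adjoint (δ f))) = 0 := by
        have := (Submodule.mem_orthogonal _ _).mp hdorth _ hdiff
        exact inner_self_eq_zero.mp this
      have heq : f = ∑ i, Mz i ((Mz i).adjoint (δ f)) := by rwa [sub_eq_zero] at hdz
      rw [heq]
      exact Submodule.le_topologicalClosure _ hSmem
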